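/- (Proposition 2 of the paper.) Suppose every loss is quadratic: φ_i(x) = (1/(2γ))(x − y_i)² for given y_i ∈ ℝ. Suppose I = {i : κ_i ≠ 0} is nonempty and p is a probability vector with min_{i∈I} p_i > 0. For each i let Δ_i ∈ ℝ maximize Δ ↦ −φ_i*(−(α_i + Δ)) − (A_iᵀw)·Δ − (v_i/(2λn))·Δ². Then, without any condition relating θ(κ, p) to min_{i∈I} p_i, ∑_{i=1}^n p_i·(D(α + Δ_i e_i) − D(α)) ≥ θ(κ, p)·(P(w) − D(α)), where θ(κ, p) = nλγ·(∑_{i∈I} κ_i²)/(∑_{i∈I} κ_i²(v_i + nλγ)/p_i). -/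

import Mathlib

open scoped BigOperators InnerProductSpace

lemma descent {E : Type*} [NormedAddCommGroup E] [InnerProductSpace ℝ E] [CompleteSpace E]
    (f : E → ℝ) (f' : E → E) (hf : ∀ z, HasGradientAt f (f' z) z)
    (hlip : LipschitzWith 1 f') (z u : E) :
    f (z + u) ≤ f z + ⟪f' z, u⟫_ℝ + ‖u‖ ^ 2 / 2 := by
  set F : ℝ → ℝ := fun t => f z + t * ⟪f' z, u⟫_ℝ + t ^ 2 * ‖u‖ ^ 2 / 2 - f (z + t • u) with hF
  have hline : ∀ t : ℝ, HasDerivAt (fun t : ℝ => z + t • u) u t := fun t => by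
    simpa using ((hasDerivAt_id t).smul_const u).const_add z
  have hcomp : ∀ t : ℝ, HasDerivAt (fun t => f (z + t • u)) ⟪f' (z + t • u), u⟫_ℝ t := by
    intro t
    have := ((hf (z + t • u)).hasFDerivAt).comp_hasDerivAt t (hline t)
    exact this
  have hFd : ∀ t : ℝ, HasDerivAt F (⟪f' z, u⟫_ℝ + t * ‖u‖ ^ 2 - ⟪f' (z + t • u), u⟫_ℝ) t := by
    intro t
    have h1 : HasDerivAt (fun t : ℝ => f z + t * ⟪f' z, u⟫_ℝ + t ^ 2 * ‖u‖ ^ 2 / 2)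
        (⟪f' z, u⟫_ℝ + t * ‖u‖ ^ 2) t := by
      have := (((hasDerivAt_id t).mul_const ⟪f' z, u⟫_ℝ).const_add (f z)).add
        (((hasDerivAt_pow 2 t).mul_const (‖u‖ ^ 2)).div_const 2)
      refine this.congr_deriv ?_
      ring
    exact h1.sub (hcomp t)
  have key : ∀ t ∈ Set.Icc (0:ℝ) 1, 0 ≤ ⟪f' z, u⟫_ℝ + t * ‖u‖ ^ 2 - ⟪f' (z + t • u), u⟫_ℝ := by
    intro t ht
    have h1 : ⟪f' (z + t • u) - f' z, u⟫_ℝ ≤ ‖f' (z + t • u) - f' z‖ * ‖u‖ :=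
      real_inner_le_norm _ _
    have h2 : ‖f' (z + t • u) - f' z‖ ≤ t * ‖u‖ := by
      have := hlip.dist_le_mul (z + t • u) z
      simp only [NNReal.coe_one, one_mul, dist_eq_norm] at this
      calc ‖f' (z + t • u) - f' z‖ ≤ ‖z + t • u - z‖ := this
        _ = |t| * ‖u‖ := by rw [add_sub_cancel_left, norm_smul, Real.norm_eq_abs]
        _ = t * ‖u‖ := by rw [abs_of_nonneg ht.1]
    have h3 : ⟪f' (z + t • u), u⟫_ℝ - ⟪f' z, u⟫_ℝ ≤ t * ‖u‖ ^ 2 := by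
      rw [← inner_sub_left]
      calc ⟪f' (z + t • u) - f' z, u⟫_ℝ ≤ ‖f' (z + t • u) - f' z‖ * ‖u‖ := h1
        _ ≤ t * ‖u‖ * ‖u‖ := by
            apply mul_le_mul_of_nonneg_right h2 (norm_nonneg _)
        _ = t * ‖u‖ ^ 2 := by ring
    linarith
  have hmono : MonotoneOn F (Set.Icc (0:ℝ) 1) := by
    apply monotoneOn_of_deriv_nonneg (convex_Icc 0 1)
    · exact fun t _ => (hFd t).continuousAt.continuousWithinAt
    · exact fun t _ => ((hFd t).differentiableAt).differentiableWithinAt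
    · intro t ht
      rw [(hFd t).deriv]
      exact key t (interior_subset ht)
  have h01 := hmono (Set.mem_Icc.2 ⟨le_refl 0, zero_le_one⟩) (Set.mem_Icc.2 ⟨zero_le_one, le_refl 1⟩) zero_le_one
  simp only [hF, one_smul, zero_smul, add_zero, one_pow, one_mul, zero_mul, zero_pow,
    zero_div] at h01
  linarith
lemma quad_conj (gam y u : ℝ) (hgam : 0 < gam) :
    IsLUB (Set.range fun x : ℝ => x * u - 1 / (2 * gam) * (x - y) ^ 2)
      (y * u + gam * u ^ 2 / 2) := by
  constructor
  · rintro b ⟨x, rfl⟩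
    have h : y * u + gam * u ^ 2 / 2 - (x * u - 1 / (2 * gam) * (x - y) ^ 2)
        = 1 / (2 * gam) * (x - y - gam * u) ^ 2 := by
      field_simp
      ring
    nlinarith [sq_nonneg (x - y - gam * u), one_div_pos.2 (by linarith : (0:ℝ) < 2 * gam)]
  · intro b hb
    have : (y + gam * u) * u - 1 / (2 * gam) * (y + gam * u - y) ^ 2 = y * u + gam * u ^ 2 / 2 := by
      field_simp
      ring
    exact this ▸ hb ⟨y + gam * u, rfl⟩
lemma quad_deriv (gam y x : ℝ) (hgam : 0 < gam) :
    HasDerivAt (fun x : ℝ => 1 / (2 * gam) * (x - y) ^ 2) ((x - y) / gam) x := by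
  have h := (((hasDerivAt_id x).sub_const y).pow 2).const_mul (1 / (2 * gam))
  refine h.congr_deriv ?_
  simp only [id_eq]
  field_simp
  ring
lemma sum_update_fin {n : ℕ} {M : Type*} [AddCommGroup M] (F : Fin n → M) (i : Fin n) (b : M) :
    ∑ j, Function.update F i b j = ∑ j, F j + (b - F i) := by
  rw [Finset.sum_update_of_mem (Finset.mem_univ i)]
  have h := Finset.sum_sdiff (Finset.singleton_subset_iff.2 (Finset.mem_univ i)) (f := F)
  simp only [Finset.sum_singleton] at h
  rw [← h]; abel
set_option maxHeartbeats 1000000 in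
theorem stmt18 (n d : ℕ) (hn : 1 ≤ n) (hd : 1 ≤ d)
    (A : Fin n → EuclideanSpace ℝ (Fin d))
    (v : Fin n → ℝ) (hv : ∀ i, v i = ‖A i‖ ^ 2)
    (lam gam : ℝ) (hlam : 0 < lam) (hgam : 0 < gam)
    (g : EuclideanSpace ℝ (Fin d) → ℝ)
    (hg : ∀ w₁ w₂ : EuclideanSpace ℝ (Fin d), ∀ a : ℝ, 0 ≤ a → a ≤ 1 →
      g (a • w₁ + (1 - a) • w₂) ≤ a * g w₁ + (1 - a) * g w₂ - a * (1 - a) / 2 * ‖w₁ - w₂‖ ^ 2)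
    (y : Fin n → ℝ)
    (φ φ' : Fin n → ℝ → ℝ)
    (hφ : ∀ i x, φ i x = 1 / (2 * gam) * (x - y i) ^ 2)
    (hφdiff : ∀ i x, HasDerivAt (φ i) (φ' i x) x)
    (φs : Fin n → ℝ → ℝ)
    (hφs : ∀ i u, IsLUB (Set.range fun x : ℝ => x * u - φ i x) (φs i u))
    (gs : EuclideanSpace ℝ (Fin d) → ℝ)
    (hgs : ∀ z, IsLUB (Set.range fun s : EuclideanSpace ℝ (Fin d) => ⟪s, z⟫_ℝ - g s) (gs z))
    (gs' : EuclideanSpace ℝ (Fin d) → EuclideanSpace ℝ (Fin d))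
    (hgs' : ∀ z, HasGradientAt gs (gs' z) z)
    (hgs'lip : LipschitzWith 1 gs')
    (P : EuclideanSpace ℝ (Fin d) → ℝ)
    (hP : ∀ u, P u = (1 / (n : ℝ)) * ∑ i, φ i ⟪A i, u⟫_ℝ + lam * g u)
    (D : (Fin n → ℝ) → ℝ)
    (hD : ∀ β : Fin n → ℝ,
      D β = -lam * gs ((1 / (lam * n)) • (∑ i, β i • A i)) - (1 / (n : ℝ)) * ∑ i, φs i (-β i))
    (α : Fin n → ℝ)
    (abar : EuclideanSpace ℝ (Fin d))
    (habar : abar = (1 / (lam * n)) • (∑ i, α i • A i))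
    (w : EuclideanSpace ℝ (Fin d)) (hw : w = gs' abar)
    (hattain : g w + gs abar = ⟪w, abar⟫_ℝ)
    (κ : Fin n → ℝ) (hκ : ∀ i, κ i = α i + φ' i ⟪A i, w⟫_ℝ)
    (Δ : Fin n → ℝ)
    (hΔ : ∀ i, ∀ Δ' : ℝ,
      -φs i (-(α i + Δ')) - ⟪A i, w⟫_ℝ * Δ' - v i / (2 * lam * n) * Δ' ^ 2 ≤
      -φs i (-(α i + Δ i)) - ⟪A i, w⟫_ℝ * (Δ i) - v i / (2 * lam * n) * (Δ i) ^ 2)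
    (p : Fin n → ℝ) (hp0 : ∀ i, 0 ≤ p i) (hp1 : ∑ i, p i = 1)
    (hcoh : ∀ i, κ i ≠ 0 → 0 < p i)
    (hI : ∃ i, κ i ≠ 0)
    (θval : ℝ)
    (hθval : θval = (n : ℝ) * lam * gam *
        (∑ i ∈ Finset.univ.filter (fun i => κ i ≠ 0), κ i ^ 2) /
        (∑ i ∈ Finset.univ.filter (fun i => κ i ≠ 0),
          κ i ^ 2 * (v i + n * lam * gam) / p i))
 :
    ∑ i, p i * (D (Function.update α i (α i + Δ i)) - D α) ≥ θval * (P w - D α) := by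
  have hn' : (0:ℝ) < n := by exact_mod_cast hn
  have hgam' : gam ≠ 0 := ne_of_gt hgam
  set a : Fin n → ℝ := fun i => ⟪A i, w⟫_ℝ with ha
  -- explicit conjugate
  have hφsval : ∀ i u, φs i u = y i * u + gam * u ^ 2 / 2 := by
    intro i u
    have h := hφs i u
    simp only [hφ] at h
    exact h.unique (quad_conj gam (y i) u hgam)
  -- explicit derivative
  have hφ'val : ∀ i x, φ' i x = (x - y i) / gam := by
    intro i x
    have h1 := hφdiff i x
    have h2 : φ i = fun x => 1 / (2 * gam) * (x - y i) ^ 2 := funext (hφ i)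
    rw [h2] at h1
    exact h1.unique (quad_deriv gam (y i) x hgam)
  have hκval : ∀ i, κ i = α i + (a i - y i) / gam := fun i => by
    rw [hκ i, hφ'val]
  have hvpos : ∀ i, 0 < v i + n * lam * gam := by
    intro i
    have : 0 ≤ v i := by rw [hv]; positivity
    have : 0 < (n:ℝ) * lam * gam := by positivity
    linarith
  -- per-coordinate dual gain bound
  have haval : ∀ i, ⟪A i, w⟫_ℝ = y i + gam * (κ i - α i) := by
    intro i
    have h := hκval i
    field_simp at h
    nlinarith [h]
  have hgain : ∀ i, lam * gam ^ 2 * κ i ^ 2 / (2 * (v i + n * lam * gam)) ≤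
      D (Function.update α i (α i + Δ i)) - D α := by
    intro i
    set c := α i + Δ i with hc
    have hupd : (fun j => Function.update α i c j • A j)
        = Function.update (fun j => α j • A j) i (c • A i) := by
      funext j
      rcases eq_or_ne j i with rfl | hj
      · simp
      · simp [Function.update_of_ne hj]
    have hsum : ∑ j, Function.update α i c j • A j = (∑ j, α j • A j) + Δ i • A i := by
      rw [hupd, sum_update_fin]
      congr 1
      rw [← sub_smul, hc, add_sub_cancel_left]
    have hb : (1 / (lam * ↑n)) • (∑ j, Function.update α i c j • A j)
        = abar + (Δ i / (lam * n)) • A i := by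
      rw [hsum, smul_add, ← habar, smul_smul]
      congr 2
      field_simp
    have hupd2 : (fun j => φs j (-(Function.update α i c j)))
        = Function.update (fun j => φs j (-(α j))) i (φs i (-c)) := by
      funext j
      rcases eq_or_ne j i with rfl | hj
      · simp
      · simp [Function.update_of_ne hj]
    have hsum2 : ∑ j, φs j (-(Function.update α i c j))
        = (∑ j, φs j (-(α j))) + (φs i (-c) - φs i (-(α i))) := by
      rw [hupd2, sum_update_fin]
    have hDu : D (Function.update α i c)
        = -lam * gs (abar + (Δ i / (lam * n)) • A i)
          - (1 / (n : ℝ)) * ((∑ j, φs j (-(α j))) + (φs i (-c) - φs i (-(α i)))) := by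
      rw [hD, hb, hsum2]
    have hDα : D α = -lam * gs abar - (1 / (n : ℝ)) * ∑ j, φs j (-(α j)) := by
      rw [hD, ← habar]
    have hdesc := descent gs gs' hgs' hgs'lip abar ((Δ i / (lam * n)) • A i)
    rw [← hw] at hdesc
    have hinner : ⟪w, (Δ i / (lam * n)) • A i⟫_ℝ = (Δ i / (lam * n)) * ⟪A i, w⟫_ℝ := by
      rw [real_inner_smul_right, real_inner_comm]
    have hnorm : ‖(Δ i / (lam * n)) • A i‖ ^ 2 = (Δ i / (lam * n)) ^ 2 * v i := by
      rw [norm_smul, mul_pow, hv, Real.norm_eq_abs, sq_abs]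
    rw [hinner, hnorm] at hdesc
    -- lower bound on dual gain in terms of the maximization objective
    have hG : D (Function.update α i c) - D α ≥
        (1 / (n : ℝ)) * ((-φs i (-(α i + Δ i)) - ⟪A i, w⟫_ℝ * Δ i
          - v i / (2 * lam * n) * Δ i ^ 2) + φs i (-(α i))) := by
      rw [hDu, hDα, hc]
      have h2 : -lam * gs (abar + (Δ i / (lam * n)) • A i) ≥
          -lam * (gs abar + Δ i / (lam * ↑n) * ⟪A i, w⟫_ℝ
            + (Δ i / (lam * ↑n)) ^ 2 * v i / 2) := by
        nlinarith [hdesc, hlam.le]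
      have h3 : -lam * (gs abar + Δ i / (lam * ↑n) * ⟪A i, w⟫_ℝ
            + (Δ i / (lam * ↑n)) ^ 2 * v i / 2)
          - (1 / (n : ℝ)) * ((∑ j, φs j (-(α j))) + (φs i (-(α i + Δ i)) - φs i (-(α i))))
          = -lam * gs abar - (1 / (n : ℝ)) * ∑ j, φs j (-(α j))
            + (1 / (n : ℝ)) * ((-φs i (-(α i + Δ i)) - ⟪A i, w⟫_ℝ * Δ i
              - v i / (2 * lam * n) * Δ i ^ 2) + φs i (-(α i))) := by
        field_simp
        ring
      linarith [h2, h3.symm.le]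
    -- optimal step value
    set Δs : ℝ := -(gam * lam * n * κ i) / (v i + n * lam * gam) with hΔs
    have hmax := hΔ i Δs
    have hval : (1 / (n : ℝ)) * ((-φs i (-(α i + Δs)) - ⟪A i, w⟫_ℝ * Δs
          - v i / (2 * lam * n) * Δs ^ 2) + φs i (-(α i)))
        = lam * gam ^ 2 * κ i ^ 2 / (2 * (v i + n * lam * gam)) := by
      rw [hφsval, hφsval, haval, hΔs]
      have hvc : v i + n * gam * lam ≠ 0 := by rw [mul_right_comm]; exact (hvpos i).ne'
      field_simp
      ring
    calc lam * gam ^ 2 * κ i ^ 2 / (2 * (v i + n * lam * gam))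
        = (1 / (n : ℝ)) * ((-φs i (-(α i + Δs)) - ⟪A i, w⟫_ℝ * Δs
            - v i / (2 * lam * n) * Δs ^ 2) + φs i (-(α i))) := hval.symm
      _ ≤ (1 / (n : ℝ)) * ((-φs i (-(α i + Δ i)) - ⟪A i, w⟫_ℝ * Δ i
            - v i / (2 * lam * n) * Δ i ^ 2) + φs i (-(α i))) := by
          apply mul_le_mul_of_nonneg_left _ (by positivity)
          linarith [hmax]
      _ ≤ D (Function.update α i c) - D α := hG
  -- duality gap identity
  have hgap : P w - D α = gam / (2 * n) * ∑ i, κ i ^ 2 := by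
    have hwabar : lam * ⟪w, abar⟫_ℝ = (1 / (n : ℝ)) * ∑ j, α j * ⟪A j, w⟫_ℝ := by
      rw [habar, real_inner_smul_right, inner_sum, Finset.mul_sum, Finset.mul_sum,
        Finset.mul_sum]
      apply Finset.sum_congr rfl
      intro j _
      rw [real_inner_smul_right, real_inner_comm]
      field_simp
    have hterm : ∀ j, φ j ⟪A j, w⟫_ℝ + φs j (-(α j)) + α j * ⟪A j, w⟫_ℝ
        = gam / 2 * κ j ^ 2 := by
      intro j
      rw [hφ, hφsval, haval]
      field_simp
      ring
    have hsum4 : ∑ j, (φ j ⟪A j, w⟫_ℝ + φs j (-(α j)) + α j * ⟪A j, w⟫_ℝ)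
        = ∑ j, gam / 2 * κ j ^ 2 := Finset.sum_congr rfl fun j _ => hterm j
    rw [hP w, hD α, ← habar]
    have h5 : lam * (g w + gs abar) = (1 / (n : ℝ)) * ∑ j, α j * ⟪A j, w⟫_ℝ := by
      rw [hattain]; exact hwabar
    simp only [Finset.sum_add_distrib] at hsum4
    have h6 : ∑ j, gam / 2 * κ j ^ 2 = gam / 2 * ∑ j, κ j ^ 2 := by
      rw [Finset.mul_sum]
    rw [h6] at hsum4
    linear_combination (1 / (n : ℝ)) * hsum4 + h5
  -- final combination
  set I := Finset.univ.filter (fun i => κ i ≠ 0) with hIdef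
  set S := ∑ i ∈ I, κ i ^ 2 with hS
  set T := ∑ i ∈ I, κ i ^ 2 * (v i + n * lam * gam) / p i with hT
  set U := ∑ i ∈ I, p i * κ i ^ 2 / (v i + n * lam * gam) with hU
  have hInonempty : I.Nonempty := by
    obtain ⟨i, hi⟩ := hI
    exact ⟨i, Finset.mem_filter.2 ⟨Finset.mem_univ i, hi⟩⟩
  have hTpos : 0 < T := by
    apply Finset.sum_pos _ hInonempty
    intro i hi
    have hki : κ i ≠ 0 := (Finset.mem_filter.1 hi).2
    have hpi := hcoh i hki
    have hvi := hvpos i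
    have : 0 < κ i ^ 2 := by positivity
    positivity
  have hSall : ∑ i, κ i ^ 2 = S := by
    rw [hS]
    symm
    apply Finset.sum_subset (Finset.filter_subset _ _)
    intro x _ hx
    have hx0 : κ x = 0 := by
      by_contra hne
      exact hx (Finset.mem_filter.2 ⟨Finset.mem_univ x, hne⟩)
    simp [hx0]
  -- Cauchy-Schwarz
  have hC : S ^ 2 ≤ U * T := by
    have hcs := Finset.sum_mul_sq_le_sq_mul_sq I
      (fun i => Real.sqrt (p i / (v i + n * lam * gam)) * |κ i|)
      (fun i => Real.sqrt ((v i + n * lam * gam) / p i) * |κ i|)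
    have h1 : ∑ i ∈ I, (Real.sqrt (p i / (v i + n * lam * gam)) * |κ i|) *
        (Real.sqrt ((v i + n * lam * gam) / p i) * |κ i|) = S := by
      apply Finset.sum_congr rfl
      intro i hi
      have hpi := hcoh i (Finset.mem_filter.1 hi).2
      have hvi := hvpos i
      have hs : Real.sqrt (p i / (v i + n * lam * gam)) *
          Real.sqrt ((v i + n * lam * gam) / p i) = 1 := by
        rw [← Real.sqrt_mul (by positivity)]
        rw [show p i / (v i + n * lam * gam) * ((v i + n * lam * gam) / p i) = 1 by
          field_simp]
        exact Real.sqrt_one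
      calc (Real.sqrt (p i / (v i + n * lam * gam)) * |κ i|) *
            (Real.sqrt ((v i + n * lam * gam) / p i) * |κ i|)
          = (Real.sqrt (p i / (v i + n * lam * gam)) *
              Real.sqrt ((v i + n * lam * gam) / p i)) * (|κ i| * |κ i|) := by ring
        _ = κ i ^ 2 := by rw [hs, one_mul, abs_mul_abs_self, sq]
    have h2 : ∑ i ∈ I, (Real.sqrt (p i / (v i + n * lam * gam)) * |κ i|) ^ 2 = U := by
      apply Finset.sum_congr rfl
      intro i hi
      have hpi := hcoh i (Finset.mem_filter.1 hi).2
      have hvi := hvpos i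
      rw [mul_pow, Real.sq_sqrt (by positivity), sq_abs]
      ring
    have h3 : ∑ i ∈ I, (Real.sqrt ((v i + n * lam * gam) / p i) * |κ i|) ^ 2 = T := by
      apply Finset.sum_congr rfl
      intro i hi
      have hpi := hcoh i (Finset.mem_filter.1 hi).2
      have hvi := hvpos i
      rw [mul_pow, Real.sq_sqrt (by positivity), sq_abs]
      ring
    rw [h1, h2, h3] at hcs
    exact hcs
  -- rewrite the RHS
  have hRHS : θval * (P w - D α) = lam * gam ^ 2 * S ^ 2 / (2 * T) := by
    rw [hθval, hgap, hSall]
    field_simp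
  -- sum of p*q over I
  have hpq : ∑ i ∈ I, p i * (lam * gam ^ 2 * κ i ^ 2 / (2 * (v i + n * lam * gam)))
      = lam * gam ^ 2 / 2 * U := by
    rw [hU, Finset.mul_sum]
    apply Finset.sum_congr rfl
    intro i hi
    have hvi := hvpos i
    field_simp
  have hstep : lam * gam ^ 2 * S ^ 2 / (2 * T) ≤ lam * gam ^ 2 / 2 * U := by
    rw [div_le_iff₀ (by positivity : (0:ℝ) < 2 * T)]
    nlinarith [hC, sq_nonneg gam, hlam.le, mul_le_mul_of_nonneg_left hC
      (by positivity : (0:ℝ) ≤ lam * gam ^ 2)]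
  have hmono1 : ∑ i ∈ I, p i * (lam * gam ^ 2 * κ i ^ 2 / (2 * (v i + n * lam * gam)))
      ≤ ∑ i, p i * (lam * gam ^ 2 * κ i ^ 2 / (2 * (v i + n * lam * gam))) := by
    apply Finset.sum_le_sum_of_subset_of_nonneg (Finset.filter_subset _ _)
    intro i _ _
    have hvi := hvpos i
    have := hp0 i
    positivity
  have hmono2 : ∑ i, p i * (lam * gam ^ 2 * κ i ^ 2 / (2 * (v i + n * lam * gam)))
      ≤ ∑ i, p i * (D (Function.update α i (α i + Δ i)) - D α) := by
    apply Finset.sum_le_sum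
    intro i _
    exact mul_le_mul_of_nonneg_left (hgain i) (hp0 i)
  rw [ge_iff_le, hRHS]
  calc lam * gam ^ 2 * S ^ 2 / (2 * T) ≤ lam * gam ^ 2 / 2 * U := hstep
    _ = ∑ i ∈ I, p i * (lam * gam ^ 2 * κ i ^ 2 / (2 * (v i + n * lam * gam))) := hpq.symm
    _ ≤ _ := le_trans hmono1 hmono2
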